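/- arXiv:0802.4381 — 4 statements merged into one kernel-verified Lean document; each statement's English description precedes it below -/
import Mathlib

section
/- Let U be a compact subset of ℝ^d, let f : U → ℝ^p be continuous, and let ξ_D be a Borel probability measure on U whose information matrix M(ξ_D) is invertible. Then ξ_D is D-optimal, i.e. it maximizes det M(ξ) over all Borel probability measures ξ on U, if and only if sup_{u ∈ U} d(u, ξ_D) = p, where d(u, ξ) = f(u)ᵀ M(ξ)⁻¹ f(u). -/
open MeasureTheory Matrix

/-- Information matrix `M(ξ) = ∫ f(u) f(u)ᵀ ξ(du)` (defined entrywise). -/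
noncomputable def infoMatrix {d p : ℕ} {U : Set (Fin d → ℝ)}
    (f : U → Fin p → ℝ) (ξ : Measure U) : Matrix (Fin p) (Fin p) ℝ :=
  Matrix.of fun i j => ∫ u, f u i * f u j ∂ξ

/-- Variance function `d(u, ξ) = f(u)ᵀ M(ξ)⁻¹ f(u)`. -/
noncomputable def varFun {d p : ℕ} {U : Set (Fin d → ℝ)}
    (f : U → Fin p → ℝ) (ξ : Measure U) (u : U) : ℝ :=
  f u ⬝ᵥ (infoMatrix f ξ)⁻¹.mulVec (f u)

section basics
variable {d p : ℕ} {U : Set (Fin d → ℝ)}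

lemma KW.integrable (hU : IsCompact U) {g : U → ℝ} (hg : Continuous g)
    (ξ : Measure U) [IsFiniteMeasure ξ] : Integrable g ξ := by
  have : CompactSpace U := isCompact_iff_compactSpace.mp hU
  exact hg.integrable_of_hasCompactSupport (HasCompactSupport.of_compactSpace g)

lemma KW.posSemidef (hU : IsCompact U) {f : U → Fin p → ℝ} (hf : Continuous f)
    (ξ : Measure U) [IsFiniteMeasure ξ] : (infoMatrix f ξ).PosSemidef := by
  have hfc : ∀ i, Continuous fun u => f u i := fun i => (continuous_apply i).comp hf
  refine Matrix.PosSemidef.of_dotProduct_mulVec_nonneg ?_ ?_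
  · ext i j
    simp only [infoMatrix, conjTranspose_apply, of_apply, star_trivial]
    congr 1; ext u; ring
  · intro x
    set g : Fin p → U → ℝ := fun i u => x i * f u i with hg
    have hgint : ∀ i j, Integrable (fun u => g i u * g j u) ξ := fun i j =>
      KW.integrable hU (by fun_prop) ξ
    have key : star x ⬝ᵥ (infoMatrix f ξ) *ᵥ x
        = ∫ u, (∑ i, g i u) ^ 2 ∂ξ := by
      have h1 : ∀ u : U, (∑ i, g i u) ^ 2 = ∑ i, ∑ j, g i u * g j u := by
        intro u; rw [sq, Finset.sum_mul_sum]
      calc star x ⬝ᵥ (infoMatrix f ξ) *ᵥ x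
          = ∑ i, ∑ j, ∫ u, g i u * g j u ∂ξ := by
            simp only [star_trivial, dotProduct, mulVec, infoMatrix, of_apply, dotProduct]
            refine Finset.sum_congr rfl fun i _ => ?_
            rw [Finset.mul_sum]
            refine Finset.sum_congr rfl fun j _ => ?_
            rw [hg]
            simp only []
            rw [show (fun u => x i * f u i * (x j * f u j))
                = fun u => (x i * x j) * (f u i * f u j) by ext u; ring,
              integral_const_mul]
            ring
        _ = ∫ u, ∑ i, ∑ j, g i u * g j u ∂ξ := by
            rw [integral_finset_sum]
            · exact Finset.sum_congr rfl fun i _ => (integral_finset_sum _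
                (fun j _ => hgint i j)).symm
            · exact fun i _ => integrable_finset_sum _ (fun j _ => hgint i j)
        _ = ∫ u, (∑ i, g i u) ^ 2 ∂ξ := by simp_rw [h1]
    rw [key]
    exact integral_nonneg fun u => sq_nonneg _
end basics

section more
variable {d p : ℕ} {U : Set (Fin d → ℝ)}

lemma KW.varFun_continuous {f : U → Fin p → ℝ} (hf : Continuous f)
    (ξ : Measure U) : Continuous (varFun f ξ) := by
  unfold varFun
  simp only [dotProduct, mulVec, dotProduct]
  fun_prop

/-- trace of A⁻¹ * M(ξ) equals the ξ-integral of the variance function of ξD -/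
lemma KW.trace_formula (hU : IsCompact U) {f : U → Fin p → ℝ} (hf : Continuous f)
    (ξD ξ : Measure U) [IsFiniteMeasure ξ] :
    ((infoMatrix f ξD)⁻¹ * infoMatrix f ξ).trace = ∫ u, varFun f ξD u ∂ξ := by
  set A := (infoMatrix f ξD)⁻¹ with hA
  have hint : ∀ i j : Fin p, Integrable (fun u => A i j * (f u j * f u i)) ξ :=
    fun i j => KW.integrable hU (by fun_prop) ξ
  calc (A * infoMatrix f ξ).trace
      = ∑ i, ∑ j, A i j * ∫ u, f u j * f u i ∂ξ := by
        simp [Matrix.trace, Matrix.diag, Matrix.mul_apply, infoMatrix]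
    _ = ∑ i, ∑ j, ∫ u, A i j * (f u j * f u i) ∂ξ := by
        simp_rw [integral_const_mul]
    _ = ∫ u, ∑ i, ∑ j, A i j * (f u j * f u i) ∂ξ := by
        rw [integral_finset_sum]
        · exact Finset.sum_congr rfl fun i _ =>
            (integral_finset_sum _ fun j _ => hint i j).symm
        · exact fun i _ => integrable_finset_sum _ fun j _ => hint i j
    _ = ∫ u, varFun f ξD u ∂ξ := by
        congr 1; ext u
        simp only [varFun, dotProduct, mulVec, dotProduct, ← hA]
        refine Finset.sum_congr rfl fun j _ => ?_
        rw [Finset.mul_sum]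
        exact Finset.sum_congr rfl fun i _ => by ring
end more

section matrixlemmas
variable {p : ℕ}

lemma KW.posDef_of_psd_isUnit {n : Type*} [Fintype n] [DecidableEq n]
    {A : Matrix n n ℝ} (hA : A.PosSemidef) (h : IsUnit A.det) : A.PosDef := by
  refine Matrix.PosDef.of_dotProduct_mulVec_pos hA.1 fun x hx =>
    lt_of_le_of_ne (hA.dotProduct_mulVec_nonneg x) fun heq => hx ?_
  have h0 : A *ᵥ x = 0 := (hA.dotProduct_mulVec_zero_iff x).mp heq.symm
  have hinj := Matrix.mulVec_injective_iff_isUnit.mpr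
    ((Matrix.isUnit_iff_isUnit_det A).mpr h)
  exact hinj (show A.mulVec x = A.mulVec 0 by simpa using h0)

lemma KW.trace_eq_sum_eigenvalues {A : Matrix (Fin p) (Fin p) ℝ}
    (hA : A.IsHermitian) : A.trace = ∑ i, hA.eigenvalues i := by
  simpa using hA.trace_eq_sum_eigenvalues

lemma KW.det_le_trace_div_pow {C : Matrix (Fin p) (Fin p) ℝ}
    (hC : C.PosSemidef) (hp : p ≠ 0) : C.det ≤ (C.trace / p) ^ p := by
  have hnn : ∀ i, 0 ≤ hC.1.eigenvalues i := hC.eigenvalues_nonneg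
  have hdet : C.det = ∏ i, hC.1.eigenvalues i := by
    simpa using hC.1.det_eq_prod_eigenvalues
  have htr : C.trace = ∑ i, hC.1.eigenvalues i := KW.trace_eq_sum_eigenvalues hC.1
  rw [hdet, htr]
  have amgm := Real.geom_mean_le_arith_mean_weighted Finset.univ
    (fun _ => (p : ℝ)⁻¹) hC.1.eigenvalues (fun _ _ => by positivity)
    (by simp [Finset.card_univ]; field_simp) (fun i _ => hnn i)
  have h1 : ∏ i, hC.1.eigenvalues i
      = (∏ i, hC.1.eigenvalues i ^ ((p : ℝ)⁻¹)) ^ p := by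
    rw [← Finset.prod_pow]
    refine Finset.prod_congr rfl fun i _ => ?_
    rw [← Real.rpow_natCast (hC.1.eigenvalues i ^ ((p:ℝ)⁻¹)) p, ← Real.rpow_mul (hnn i)]
    rw [inv_mul_cancel₀ (by exact_mod_cast hp), Real.rpow_one]
  rw [h1]
  have h2 : (∑ i, hC.1.eigenvalues i) / p = ∑ i, (p:ℝ)⁻¹ * hC.1.eigenvalues i := by
    rw [← Finset.mul_sum]; ring
  rw [h2]
  exact pow_le_pow_left₀ (Finset.prod_nonneg fun i _ => Real.rpow_nonneg (hnn i) _) amgm p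

open scoped MatrixOrder in
lemma KW.det_le_of_trace_le {A B : Matrix (Fin p) (Fin p) ℝ}
    (hA : A.PosDef) (hB : B.PosSemidef) (h : (A⁻¹ * B).trace ≤ p) :
    B.det ≤ A.det := by
  rcases Nat.eq_zero_or_pos p with hp | hp
  · have : IsEmpty (Fin p) := by rw [hp]; infer_instance
    simp [Matrix.det_isEmpty]
  have hdetA : 0 < A.det := hA.det_pos
  set S := CFC.sqrt A with hSdef
  have hS : S.PosSemidef := (CFC.sqrt_nonneg A).posSemidef
  have hSS : S * S = A := CFC.sqrt_mul_sqrt_self A hA.posSemidef.nonneg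
  have hdetS : S.det * S.det = A.det := by rw [← Matrix.det_mul, hSS]
  have hdetSne : S.det ≠ 0 := fun h0 => by
    rw [h0, mul_zero] at hdetS; exact hdetA.ne' hdetS.symm
  set T := S⁻¹ with hTdef
  have hTh : T.IsHermitian := hS.1.inv
  have hC : (T * B * T).PosSemidef := by
    have := hB.mul_mul_conjTranspose_same T
    rwa [hTh.eq] at this
  have htrC : (T * B * T).trace = (A⁻¹ * B).trace := by
    rw [Matrix.trace_mul_comm, ← mul_assoc, ← Matrix.mul_inv_rev, hSS]
  have htrCnn : 0 ≤ (T * B * T).trace := by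
    rw [KW.trace_eq_sum_eigenvalues hC.1]
    exact Finset.sum_nonneg fun i _ => hC.eigenvalues_nonneg i
  have hdetC : (T * B * T).det ≤ 1 := by
    refine le_trans (KW.det_le_trace_div_pow hC hp.ne') ?_
    refine pow_le_one₀ (by positivity) ?_
    rw [div_le_one (by exact_mod_cast hp)]
    rw [htrC]; exact h
  have hdetTB : (T * B * T).det = B.det / A.det := by
    rw [Matrix.det_mul, Matrix.det_mul, Matrix.det_nonsing_inv, Ring.inverse_eq_inv', ← hdetS]
    field_simp
  rw [hdetTB, div_le_one hdetA] at hdetC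
  exact hdetC
end matrixlemmas


/-- Kiefer–Wolfowitz Equivalence Theorem, (1) ⇔ (2): a design `ξD` with invertible
information matrix is D-optimal iff `sup_{u ∈ U} d(u, ξD) = p`. -/
theorem kieferWolfowitz_Doptimal_iff_sup_varFun_eq
    {d p : ℕ} (U : Set (Fin d → ℝ)) (hU : IsCompact U)
    (f : U → Fin p → ℝ) (hf : Continuous f)
    (ξD : Measure U) (hprob : IsProbabilityMeasure ξD)
    (hinv : IsUnit (infoMatrix f ξD).det) :
    (∀ ξ : Measure U, IsProbabilityMeasure ξ →
        (infoMatrix f ξ).det ≤ (infoMatrix f ξD).det)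
      ↔ (⨆ u : U, varFun f ξD u) = p := by
  have hcs : CompactSpace U := isCompact_iff_compactSpace.mp hU
  have hne : Nonempty U := by
    rcases isEmpty_or_nonempty U with h | h
    · exfalso
      have h1 : ξD Set.univ = 1 := measure_univ
      rw [Set.univ_eq_empty_iff.mpr h, measure_empty] at h1
      exact zero_ne_one h1
    · exact h
  set A := infoMatrix f ξD with hAdef
  have hApsd : A.PosSemidef := KW.posSemidef hU hf ξD
  have hApd : A.PosDef := KW.posDef_of_psd_isUnit hApsd hinv
  have hvc : Continuous (varFun f ξD) := KW.varFun_continuous hf ξD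
  have hbdd : BddAbove (Set.range (varFun f ξD)) :=
    (isCompact_range hvc).bddAbove
  have hvint : ∀ (ξ : Measure U) [IsFiniteMeasure ξ], Integrable (varFun f ξD) ξ :=
    fun ξ _ => KW.integrable hU hvc ξ
  -- the integral identity ∫ varFun dξD = p
  have hIp : ∫ u, varFun f ξD u ∂ξD = p := by
    rw [← KW.trace_formula hU hf ξD ξD, ← hAdef, Matrix.nonsing_inv_mul A hinv,
      Matrix.trace_one]
    simp
  -- p ≤ sup
  have hple : (p : ℝ) ≤ ⨆ u : U, varFun f ξD u := by
    rw [← hIp]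
    calc ∫ u, varFun f ξD u ∂ξD ≤ ∫ _u, (⨆ u : U, varFun f ξD u) ∂ξD :=
          integral_mono (hvint ξD) (integrable_const _) fun u => le_ciSup hbdd u
      _ = ⨆ u : U, varFun f ξD u := by simp [measure_univ]
  constructor
  · -- optimality → sup = p
    intro hopt
    refine le_antisymm (ciSup_le fun u₀ => ?_) hple
    by_contra hgt
    push_neg at hgt
    set d₀ := varFun f ξD u₀ with hd₀def
    have hp1 : 1 ≤ p := by
      rcases Nat.eq_zero_or_pos p with hp | hp
      · exfalso
        have : d₀ = 0 := by
          subst hp; simp [hd₀def, varFun, dotProduct]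
        rw [this, hp] at hgt; norm_num at hgt
      · exact hp
    have hpd : (p : ℝ) < d₀ := hgt
    have hd1 : (1 : ℝ) < d₀ := lt_of_le_of_lt (by exact_mod_cast hp1) hpd
    set K : ℝ := ((p : ℝ) - 1) * (d₀ - 1) with hKdef
    have hK0 : 0 ≤ K := mul_nonneg (by
      have : (1:ℝ) ≤ (p:ℝ) := by exact_mod_cast hp1
      linarith) (by linarith)
    set ε : ℝ := min (1/2) ((d₀ - p) / (2 * (K + 1))) with hεdef
    have hε0 : 0 < ε := lt_min (by norm_num)
      (div_pos (by linarith) (by positivity))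
    have hε12 : ε ≤ 1/2 := min_le_left _ _
    have hε1 : ε < 1 := lt_of_le_of_lt hε12 (by norm_num)
    have hKε : K * ε < d₀ - p := by
      have h1 : ε ≤ (d₀ - p) / (2 * (K + 1)) := min_le_right _ _
      have h1' : ε * (2 * (K + 1)) ≤ d₀ - p := (le_div_iff₀ (by positivity)).mp h1
      have h2 : 0 ≤ K * ε := mul_nonneg hK0 hε0.le
      nlinarith
    -- the perturbed design
    set δ : Measure U := Measure.dirac u₀ with hδdef
    set ξ : Measure U := ENNReal.ofReal (1 - ε) • ξD + ENNReal.ofReal ε • δ with hξdef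
    have hξprob : IsProbabilityMeasure ξ := by
      constructor
      rw [hξdef]
      simp only [Measure.add_apply, Measure.smul_apply, smul_eq_mul]
      rw [measure_univ, measure_univ, mul_one, mul_one,
        ← ENNReal.ofReal_add (by linarith) (le_of_lt hε0)]
      norm_num
    -- compute the information matrix of ξ
    have hMξ : infoMatrix f ξ = (1 - ε) • A + ε • vecMulVec (f u₀) (f u₀) := by
      ext i j
      have hgc : Continuous fun u => f u i * f u j := by fun_prop
      have hint1 : Integrable (fun u => f u i * f u j) ξD := KW.integrable hU hgc ξD
      have hint2 : Integrable (fun u => f u i * f u j) δ := KW.integrable hU hgc δ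
      simp only [infoMatrix, of_apply, Matrix.add_apply, Matrix.smul_apply,
        vecMulVec_apply, smul_eq_mul, hξdef]
      rw [integral_add_measure (hint1.smul_measure ENNReal.ofReal_ne_top)
        (hint2.smul_measure ENNReal.ofReal_ne_top),
        integral_smul_measure, integral_smul_measure,
        ENNReal.toReal_ofReal (by linarith), ENNReal.toReal_ofReal (le_of_lt hε0),
        hδdef, integral_dirac]
      simp [hAdef, infoMatrix, smul_eq_mul]
    -- determinant computation
    have h1ε : (0:ℝ) < 1 - ε := by linarith
    set c : ℝ := ε / (1 - ε) with hcdef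
    have hc : (1 - ε) * c = ε := by
      rw [hcdef, mul_div_cancel₀ _ h1ε.ne']
    set w : Fin p → ℝ := c • (A⁻¹ *ᵥ f u₀) with hwdef
    have hfac : (1 - ε) • A + ε • vecMulVec (f u₀) (f u₀)
        = A * ((1 - ε) • (1 + Matrix.replicateCol Unit w * Matrix.replicateRow Unit (f u₀))) := by
      rw [Matrix.mul_smul, Matrix.mul_add, Matrix.mul_one, ← Matrix.mul_assoc,
        ← Matrix.replicateCol_mulVec, hwdef, Matrix.mulVec_smul, Matrix.mulVec_mulVec,
        Matrix.mul_nonsing_inv A hinv, Matrix.one_mulVec, Matrix.replicateCol_smul,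
        Matrix.smul_mul, ← Matrix.vecMulVec_eq (ι := Unit), smul_add, smul_smul, hc]
    have hdot : f u₀ ⬝ᵥ w = c * d₀ := by
      rw [hwdef, dotProduct_smul, smul_eq_mul, hd₀def]; rfl
    have hdet : (infoMatrix f ξ).det = A.det * ((1 - ε) ^ p * (1 + c * d₀)) := by
      rw [hMξ, hfac, Matrix.det_mul, Matrix.det_smul, Matrix.det_one_add_replicateCol_mul_replicateRow,
        hdot]
      simp [Fintype.card_fin]
    have hgt1 : 1 < (1 - ε) ^ p * (1 + c * d₀) := by
      have hpow : (1 - ε) ^ p = (1 - ε) ^ (p - 1) * (1 - ε) := by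
        conv_lhs => rw [show p = (p - 1) + 1 from (Nat.sub_add_cancel hp1).symm]
        rw [pow_succ]
      have hcast : ((p - 1 : ℕ) : ℝ) = (p:ℝ) - 1 := by
        rw [Nat.cast_sub hp1]; norm_num
      have hb : 1 - ((p:ℝ) - 1) * ε ≤ (1 - ε) ^ (p - 1) := by
        have h := one_add_mul_le_pow (show (-2:ℝ) ≤ -ε by linarith) (p - 1)
        rw [hcast] at h
        calc 1 - ((p:ℝ) - 1) * ε = 1 + ((p:ℝ) - 1) * (-ε) := by ring
          _ ≤ (1 + -ε) ^ (p - 1) := h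
          _ = (1 - ε) ^ (p - 1) := by rw [← sub_eq_add_neg]
      have hmid : (1 - ε) * (1 + c * d₀) = 1 + ε * (d₀ - 1) := by
        rw [mul_add, mul_one, ← mul_assoc, hc]; ring
      have hpos : (0:ℝ) < 1 + ε * (d₀ - 1) := by nlinarith
      have key : (1 - ((p:ℝ) - 1) * ε) * (1 + ε * (d₀ - 1))
          ≤ (1 - ε) ^ (p - 1) * (1 + ε * (d₀ - 1)) :=
        mul_le_mul_of_nonneg_right hb hpos.le
      have hKε2 : K * (ε * ε) < (d₀ - (p:ℝ)) * ε := by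
        have := mul_lt_mul_of_pos_right hKε hε0
        nlinarith
      have expand : 1 < (1 - ((p:ℝ) - 1) * ε) * (1 + ε * (d₀ - 1)) := by
        have : (1 - ((p:ℝ) - 1) * ε) * (1 + ε * (d₀ - 1))
            = 1 + (d₀ - (p:ℝ)) * ε - K * (ε * ε) := by rw [hKdef]; ring
        rw [this]; linarith
      calc (1:ℝ) < (1 - ((p:ℝ) - 1) * ε) * (1 + ε * (d₀ - 1)) := expand
        _ ≤ (1 - ε) ^ (p - 1) * (1 + ε * (d₀ - 1)) := key
        _ = (1 - ε) ^ p * (1 + c * d₀) := by rw [hpow, ← hmid]; ring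
    have hcontra := hopt ξ hξprob
    rw [hdet] at hcontra
    have hdp : 0 < A.det := hApd.det_pos
    have hlt := mul_lt_mul_of_pos_left hgt1 hdp
    rw [mul_one] at hlt
    exact absurd hcontra (not_le.mpr hlt)
  · -- sup = p → optimality
    intro hsup ξ hξprob
    have hBpsd : (infoMatrix f ξ).PosSemidef := KW.posSemidef hU hf ξ
    refine KW.det_le_of_trace_le hApd hBpsd ?_
    rw [KW.trace_formula hU hf ξD ξ]
    calc ∫ u, varFun f ξD u ∂ξ ≤ ∫ _u, (p : ℝ) ∂ξ :=
          integral_mono (hvint ξ) (integrable_const _) fun u => by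
            rw [← hsup]; exact le_ciSup hbdd u
      _ = p := by simp [measure_univ]
end

section
/- Let U be a compact subset of ℝ^d, let f : U → ℝ^p be continuous, and let ξ_D be a Borel probability measure on U with invertible information matrix M(ξ_D) that maximizes det M(ξ) over all Borel probability measures ξ on U. Then every point u₀ in the topological support of ξ_D satisfies d(u₀, ξ_D) = p, where d(u, ξ) = f(u)ᵀ M(ξ)⁻¹ f(u). -/
open MeasureTheory Matrix

set_option linter.unreachableTactic false
set_option linter.unusedTactic false

lemma det_add_smul_vecMulVec {p : ℕ} (M : Matrix (Fin p) (Fin p) ℝ) (hM : IsUnit M.det)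
    (v : Fin p → ℝ) (c : ℝ) :
    (M + c • vecMulVec v v).det = M.det * (1 + c * (v ⬝ᵥ M⁻¹ *ᵥ v)) := by
  have h1 : c • vecMulVec v v = Matrix.replicateCol (Fin 1) (c • v) * Matrix.replicateRow (Fin 1) v := by
    rw [vecMulVec_eq (Fin 1)]
    ext i j
    simp [Matrix.mul_apply]
    ring
  rw [h1, det_add_mul _ _ hM]
  congr 1
  rw [det_eq_elem_of_subsingleton _ (0 : Fin 1)]
  simp [Matrix.add_apply, Matrix.one_apply, Matrix.mul_apply, dotProduct, mulVec,
    Finset.mul_sum, Finset.sum_mul]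
  rw [Finset.sum_comm]
  apply Finset.sum_congr rfl
  intro i _
  apply Finset.sum_congr rfl
  intro j _
  ring

lemma det_smul_add_smul_vecMulVec {p : ℕ} (M : Matrix (Fin p) (Fin p) ℝ) (hM : IsUnit M.det)
    (v : Fin p → ℝ) {a : ℝ} (b : ℝ) (ha : a ≠ 0) :
    (a • M + b • vecMulVec v v).det = a ^ p * M.det * (1 + (b / a) * (v ⬝ᵥ M⁻¹ *ᵥ v)) := by
  have h : a • M + b • vecMulVec v v = a • (M + (b / a) • vecMulVec v v) := by
    rw [smul_add, smul_smul, mul_div_cancel₀ _ ha]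
  rw [h, Matrix.det_smul, det_add_smul_vecMulVec M hM v, Fintype.card_fin]
  ring

lemma integrable_of_continuous {X : Type*} [TopologicalSpace X] [CompactSpace X]
    [MeasurableSpace X] [OpensMeasurableSpace X] (μ : Measure X) [IsFiniteMeasure μ]
    {g : X → ℝ} (hg : Continuous g) : Integrable g μ := by
  rw [← integrableOn_univ]
  exact hg.continuousOn.integrableOn_compact' isCompact_univ MeasurableSet.univ

lemma infoMatrix_mix {d p : ℕ} {U : Set (Fin d → ℝ)} [CompactSpace U]
    (f : U → Fin p → ℝ) (hf : Continuous f)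
    (ξ : Measure U) [IsFiniteMeasure ξ] (u : U) {α : ℝ} (h0 : 0 ≤ α) (h1 : α ≤ 1) :
    infoMatrix f (ENNReal.ofReal (1 - α) • ξ + ENNReal.ofReal α • Measure.dirac u)
      = (1 - α) • infoMatrix f ξ + α • vecMulVec (f u) (f u) := by
  ext i j
  have hc : ∀ i j : Fin p, Continuous fun u : U => f u i * f u j := fun i j =>
    ((continuous_apply i).comp hf).mul ((continuous_apply j).comp hf)
  simp only [infoMatrix, Matrix.of_apply, Matrix.add_apply, Matrix.smul_apply,
    vecMulVec_apply, smul_eq_mul]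
  rw [integral_add_measure ((integrable_of_continuous _ (hc i j)).smul_measure ENNReal.ofReal_ne_top)
      ((integrable_of_continuous _ (hc i j)).smul_measure ENNReal.ofReal_ne_top),
    integral_smul_measure, integral_smul_measure, integral_dirac,
    ENNReal.toReal_ofReal (by linarith), ENNReal.toReal_ofReal h0]
  rfl

/-- Kiefer–Wolfowitz Equivalence Theorem, last assertion: at every point of the
topological support of a D-optimal design `ξD` (i.e. every point all of whose
neighborhoods have positive `ξD`-measure), the variance function equals `p`. -/
lemma infoMatrix_quad {d p : ℕ} {U : Set (Fin d → ℝ)} [CompactSpace U]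
    (f : U → Fin p → ℝ) (hf : Continuous f)
    (ξ : Measure U) [IsFiniteMeasure ξ] (x : Fin p → ℝ) :
    x ⬝ᵥ (infoMatrix f ξ) *ᵥ x = ∫ u, (f u ⬝ᵥ x) ^ 2 ∂ξ := by
  have hc : ∀ i j : Fin p, Continuous fun u : U => f u i * f u j := fun i j =>
    ((continuous_apply i).comp hf).mul ((continuous_apply j).comp hf)
  have hint : ∀ i j : Fin p, Integrable (fun u : U => x i * x j * (f u i * f u j)) ξ :=
    fun i j => (integrable_of_continuous _ (hc i j)).const_mul _
  have h1 : ∀ u : U, (f u ⬝ᵥ x) ^ 2 = ∑ i, ∑ j, x i * x j * (f u i * f u j) := by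
    intro u
    rw [sq, dotProduct, Finset.sum_mul_sum]
    exact Finset.sum_congr rfl fun i _ => Finset.sum_congr rfl fun j _ => by ring
  calc x ⬝ᵥ (infoMatrix f ξ) *ᵥ x
      = ∑ i, ∑ j, x i * x j * ∫ u, f u i * f u j ∂ξ := by
        simp only [dotProduct, mulVec, infoMatrix, Matrix.of_apply, Finset.mul_sum]
        exact Finset.sum_congr rfl fun i _ => Finset.sum_congr rfl fun j _ => by ring
    _ = ∑ i, ∑ j, ∫ u, x i * x j * (f u i * f u j) ∂ξ := by
        simp_rw [integral_const_mul]
    _ = ∫ u, ∑ i, ∑ j, x i * x j * (f u i * f u j) ∂ξ := by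
        rw [integral_finset_sum _ fun i _ => integrable_finset_sum _ fun j _ => hint i j]
        exact Finset.sum_congr rfl fun i _ =>
          (integral_finset_sum _ (fun j _ => hint i j)).symm
    _ = ∫ u, (f u ⬝ᵥ x) ^ 2 ∂ξ := by simp_rw [h1]

lemma infoMatrix_posSemidef {d p : ℕ} {U : Set (Fin d → ℝ)} [CompactSpace U]
    (f : U → Fin p → ℝ) (hf : Continuous f)
    (ξ : Measure U) [IsFiniteMeasure ξ] : (infoMatrix f ξ).PosSemidef := by
  refine posSemidef_iff_dotProduct_mulVec.mpr ⟨?_, ?_⟩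
  · ext i j
    simp only [infoMatrix, Matrix.conjTranspose_apply, Matrix.of_apply, star_trivial]
    simp_rw [mul_comm]
  · intro x
    simp only [star_trivial, RCLike.re_to_real]
    rw [infoMatrix_quad f hf ξ x]
    exact integral_nonneg fun u => sq_nonneg _

lemma integral_varFun {d p : ℕ} {U : Set (Fin d → ℝ)} [CompactSpace U]
    (f : U → Fin p → ℝ) (hf : Continuous f)
    (ξ : Measure U) [IsFiniteMeasure ξ] (hinv : IsUnit (infoMatrix f ξ).det) :
    ∫ u, varFun f ξ u ∂ξ = p := by
  set M := infoMatrix f ξ with hM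
  have hc : ∀ i j : Fin p, Continuous fun u : U => f u i * f u j := fun i j =>
    ((continuous_apply i).comp hf).mul ((continuous_apply j).comp hf)
  have hint : ∀ i j : Fin p, Integrable (fun u : U => M⁻¹ i j * (f u i * f u j)) ξ :=
    fun i j => (integrable_of_continuous _ (hc i j)).const_mul _
  have h1 : ∀ u : U, varFun f ξ u = ∑ i, ∑ j, M⁻¹ i j * (f u i * f u j) := by
    intro u
    simp only [varFun, dotProduct, mulVec, Finset.mul_sum, ← hM]
    exact Finset.sum_congr rfl fun i _ => Finset.sum_congr rfl fun j _ => by ring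
  have hsym : ∀ i j : Fin p, M i j = M j i := by
    intro i j
    simp only [hM, infoMatrix, Matrix.of_apply]
    simp_rw [mul_comm]
  calc ∫ u, varFun f ξ u ∂ξ
      = ∑ i, ∑ j, ∫ u, M⁻¹ i j * (f u i * f u j) ∂ξ := by
        simp_rw [h1]
        rw [integral_finset_sum _ (fun i _ => integrable_finset_sum _ (fun j _ => hint i j))]
        exact Finset.sum_congr rfl fun i _ => integral_finset_sum _ (fun j _ => hint i j)
    _ = ∑ i, ∑ j, M⁻¹ i j * M j i := by
        simp_rw [integral_const_mul]
        exact Finset.sum_congr rfl fun i _ => Finset.sum_congr rfl fun j _ => by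
          rw [← hsym i j]; rfl
    _ = (M⁻¹ * M).trace := by
        simp [Matrix.trace, Matrix.diag, Matrix.mul_apply]
    _ = p := by rw [Matrix.nonsing_inv_mul M hinv, Matrix.trace_one, Fintype.card_fin]

/-- Kiefer–Wolfowitz Equivalence Theorem, last assertion. -/
theorem kieferWolfowitz_varFun_eq_dim_on_support
    {d p : ℕ} (U : Set (Fin d → ℝ)) (hU : IsCompact U)
    (f : U → Fin p → ℝ) (hf : Continuous f)
    (ξD : Measure U) (hprob : IsProbabilityMeasure ξD)
    (hinv : IsUnit (infoMatrix f ξD).det)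
    (hopt : ∀ ξ : Measure U, IsProbabilityMeasure ξ →
        (infoMatrix f ξ).det ≤ (infoMatrix f ξD).det) :
    ∀ u₀ : U, (∀ V ∈ nhds u₀, ξD V ≠ 0) → varFun f ξD u₀ = p := by
  intro u₀ hu₀
  haveI : CompactSpace U := isCompact_iff_compactSpace.mp hU
  rcases Nat.eq_zero_or_pos p with hp | hp
  · subst hp
    simp [varFun, dotProduct]
  set M := infoMatrix f ξD with hMdef
  have hPSD : M.PosSemidef := infoMatrix_posSemidef f hf ξD
  have hdetpos : 0 < M.det := by
    have h4 : (0:ℝ) ≤ M.det := hPSD.det_nonneg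
    exact lt_of_le_of_ne h4 (Ne.symm hinv.ne_zero)
  have hvarcont : Continuous (varFun f ξD) := by
    have hform : varFun f ξD = fun u => ∑ i, ∑ j, f u i * (M⁻¹ i j * f u j) := by
      funext u
      simp [varFun, dotProduct, mulVec, Finset.mul_sum, ← hMdef]
    rw [hform]
    exact continuous_finset_sum _ fun i _ => continuous_finset_sum _ fun j _ =>
      ((continuous_apply i).comp hf).mul (continuous_const.mul ((continuous_apply j).comp hf))
  -- the variance function is everywhere at most p
  have key : ∀ u : U, varFun f ξD u ≤ p := by
    intro u
    set dv := varFun f ξD u with hdv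
    have hdveq : dv = f u ⬝ᵥ M⁻¹ *ᵥ f u := rfl
    by_contra hgt
    push_neg at hgt
    set g : ℝ → ℝ := fun α => (1-α)^p * (1 + (α/(1-α)) * dv) with hgdef
    have hg : ∀ α ∈ Set.Ioo (0:ℝ) 1, g α ≤ 1 := by
      intro α hα
      obtain ⟨hα0, hα1⟩ := hα
      set ξα := ENNReal.ofReal (1-α) • ξD + ENNReal.ofReal α • Measure.dirac u with hξα
      have hprobα : IsProbabilityMeasure ξα := by
        constructor
        simp only [hξα, Measure.coe_add, Pi.add_apply, Measure.smul_apply,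
          measure_univ, smul_eq_mul, mul_one]
        rw [← ENNReal.ofReal_add (by linarith) hα0.le]
        norm_num
      have hdet := hopt ξα hprobα
      rw [hξα, infoMatrix_mix f hf ξD u (by linarith) hα1.le,
        det_smul_add_smul_vecMulVec M hinv (f u) α (by linarith : (1:ℝ)-α ≠ 0)] at hdet
      have h2 : M.det * g α ≤ M.det * 1 := by
        rw [mul_one]
        calc M.det * g α = (1-α)^p * M.det * (1 + (α/(1-α)) * dv) := by
              rw [hgdef]; ring
          _ ≤ M.det := by rw [hdveq]; exact hdet
      exact le_of_mul_le_mul_left h2 hdetpos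
    have h1 : HasDerivAt (fun α : ℝ => 1 - α) (-1) 0 := by
      simpa using (hasDerivAt_id (0:ℝ)).const_sub 1
    have hpow : HasDerivAt (fun α : ℝ => (1-α)^p) (-(p:ℝ)) 0 := by
      have := h1.pow p
      norm_num at this
      exact this
    have hdiv : HasDerivAt (fun α : ℝ => α / (1-α)) 1 0 := by
      have := (hasDerivAt_id (0:ℝ)).div h1 (by norm_num)
      norm_num at this
      exact this
    have hlin : HasDerivAt (fun α : ℝ => 1 + (α/(1-α)) * dv) dv 0 := by
      simpa using (hdiv.mul_const dv).const_add 1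
    have hderiv : HasDerivAt g (dv - p) 0 := by
      have := hpow.mul hlin
      norm_num at this
      exact this.congr_deriv (by ring)
    have hslope := hasDerivAt_iff_tendsto_slope.mp hderiv
    have hsub : nhdsWithin (0:ℝ) (Set.Ioi 0) ≤ nhdsWithin 0 {0}ᶜ :=
      nhdsWithin_mono _ fun x hx => ne_of_gt hx
    have htend := hslope.mono_left hsub
    have hg0 : g 0 = 1 := by simp [hgdef]
    have hev : ∀ᶠ α in nhdsWithin (0:ℝ) (Set.Ioi 0), slope g 0 α ≤ 0 := by
      filter_upwards [Ioo_mem_nhdsGT_of_mem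
        (by norm_num : (0:ℝ) ∈ Set.Ico (0:ℝ) 1)] with α hα
      rw [slope_def_field]
      rw [hg0]
      apply div_nonpos_of_nonpos_of_nonneg
      · linarith [hg α hα]
      · linarith [hα.1]
    have hle : dv - p ≤ 0 := le_of_tendsto htend hev
    linarith
  -- the integral of the variance function is p
  have hIvar : ∫ u, varFun f ξD u ∂ξD = p := integral_varFun f hf ξD hinv
  -- conclude
  by_contra hne
  have hlt : varFun f ξD u₀ < p := lt_of_le_of_ne (key u₀) hne
  set ε := ((p:ℝ) - varFun f ξD u₀)/2 with hε
  have hεpos : 0 < ε := by rw [hε]; linarith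
  set V := {u : U | varFun f ξD u < p - ε} with hV
  have hVopen : IsOpen V := isOpen_lt hvarcont continuous_const
  have hu₀V : u₀ ∈ V := by simp only [hV, Set.mem_setOf_eq]; linarith
  have hVpos : ξD V ≠ 0 := hu₀ V (hVopen.mem_nhds hu₀V)
  have hμV : ξD V ≠ ⊤ := measure_ne_top _ _
  set D := fun u => (p:ℝ) - varFun f ξD u with hD
  have hDint : Integrable D ξD :=
    integrable_of_continuous _ (continuous_const.sub hvarcont)
  have hID : ∫ u, D u ∂ξD = 0 := by
    rw [hD, integral_sub (integrable_const _) (integrable_of_continuous _ hvarcont),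
      hIvar, integral_const]
    simp
  have h1 : ε * (ξD V).toReal ≤ ∫ u in V, D u ∂ξD := by
    rw [← measureReal_def]
    apply setIntegral_ge_of_const_le_real hVopen.measurableSet hμV
    · intro u hu
      simp only [hV, Set.mem_setOf_eq] at hu
      simp only [hD]
      linarith
    · exact hDint.integrableOn
  have h2 : ∫ u in V, D u ∂ξD ≤ ∫ u, D u ∂ξD :=
    setIntegral_le_integral hDint (ae_of_all _ fun u => by
      simp only [hD, Pi.zero_apply]; linarith [key u])
  have h3 : 0 < ε * (ξD V).toReal := mul_pos hεpos (ENNReal.toReal_pos hVpos hμV)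
  linarith
end

section
/- Let f₁, …, f_m ∈ ℝ^p, let λ₁, …, λ_m ≥ 0 with ∑ λ_i = 1, and let w_i > 0 and σ_i > 0 for each i. Define M₁ = ∑_i λ_i w_i f_i f_iᵀ, M₂ = ∑_i λ_i w_i² σ_i² f_i f_iᵀ, and M = ∑_i λ_i σ_i⁻² f_i f_iᵀ, and assume M₁ and M are invertible. Then the matrix C = M₁⁻¹ M₂ M₁⁻¹ satisfies: C − M⁻¹ is positive semidefinite; moreover, if w_i = c σ_i⁻² for all i and some constant c > 0, then C = M⁻¹. -/
open Matrix

lemma dot_sum_mulVec {p m : ℕ} (A : Fin m → Matrix (Fin p) (Fin p) ℝ) (x y : Fin p → ℝ) :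
    x ⬝ᵥ ((∑ i, A i) *ᵥ y) = ∑ i, x ⬝ᵥ (A i *ᵥ y) := by
  have h : ((∑ i, A i) *ᵥ y) = ∑ i, A i *ᵥ y := by
    ext j
    simp only [mulVec, dotProduct, Matrix.sum_apply, Finset.sum_apply, Finset.sum_mul]
    rw [Finset.sum_comm]
  rw [h]
  simp only [dotProduct, Finset.sum_apply, Finset.mul_sum]
  rw [Finset.sum_comm]

lemma dot_smul_vmv {p : ℕ} (c : ℝ) (g x y : Fin p → ℝ) :
    x ⬝ᵥ ((c • vecMulVec g g) *ᵥ y) = c * (g ⬝ᵥ x) * (g ⬝ᵥ y) := by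
  simp only [smul_mulVec, dotProduct_smul, smul_eq_mul]
  rw [show (vecMulVec g g) *ᵥ y = (g ⬝ᵥ y) • g by
    ext j
    simp only [mulVec, dotProduct, vecMulVec_apply, Pi.smul_apply, smul_eq_mul]
    rw [Finset.sum_mul]
    exact Finset.sum_congr rfl fun i _ => by ring]
  rw [dotProduct_smul, dotProduct_comm x g]
  simp only [smul_eq_mul]
  ring

lemma vmv_symm {p : ℕ} (g : Fin p → ℝ) : (vecMulVec g g)ᵀ = vecMulVec g g := by
  ext i j; simp [vecMulVec_apply, mul_comm]

/-- Optimality of the optimally-weighted LS estimator: with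
`M₁ = ∑ λᵢ wᵢ fᵢfᵢᵀ`, `M₂ = ∑ λᵢ wᵢ²σᵢ² fᵢfᵢᵀ`, `M = ∑ λᵢ σᵢ⁻² fᵢfᵢᵀ` invertible,
the asymptotic covariance `C = M₁⁻¹ M₂ M₁⁻¹` satisfies `C − M⁻¹ ⪰ 0`, with equality
`C = M⁻¹` when `wᵢ = c σᵢ⁻²` for some constant `c > 0`. -/
theorem weightedLS_covariance_ge_optimal
    {p m : ℕ} (f : Fin m → Fin p → ℝ) (lam w σ : Fin m → ℝ)
    (hlam : ∀ i, 0 ≤ lam i) (hsum : ∑ i, lam i = 1)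
    (hw : ∀ i, 0 < w i) (hσ : ∀ i, 0 < σ i)
    (M₁ M₂ M : Matrix (Fin p) (Fin p) ℝ)
    (hM₁ : M₁ = ∑ i, (lam i * w i) • vecMulVec (f i) (f i))
    (hM₂ : M₂ = ∑ i, (lam i * w i ^ 2 * σ i ^ 2) • vecMulVec (f i) (f i))
    (hM : M = ∑ i, (lam i / σ i ^ 2) • vecMulVec (f i) (f i))
    (hM₁inv : IsUnit M₁.det) (hMinv : IsUnit M.det) :
    (M₁⁻¹ * M₂ * M₁⁻¹ - M⁻¹).PosSemidef ∧
    ((∃ c : ℝ, 0 < c ∧ ∀ i, w i = c / σ i ^ 2) → M₁⁻¹ * M₂ * M₁⁻¹ = M⁻¹) := by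
  have hM₁sym : M₁ᵀ = M₁ := by
    rw [hM₁, transpose_sum]
    exact Finset.sum_congr rfl fun i _ => by rw [transpose_smul, vmv_symm]
  have hM₂sym : M₂ᵀ = M₂ := by
    rw [hM₂, transpose_sum]
    exact Finset.sum_congr rfl fun i _ => by rw [transpose_smul, vmv_symm]
  have hMsym : Mᵀ = M := by
    rw [hM, transpose_sum]
    exact Finset.sum_congr rfl fun i _ => by rw [transpose_smul, vmv_symm]
  have hM₁isym : (M₁⁻¹)ᵀ = M₁⁻¹ := by rw [transpose_nonsing_inv, hM₁sym]
  have hMisym : (M⁻¹)ᵀ = M⁻¹ := by rw [transpose_nonsing_inv, hMsym]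
  constructor
  · rw [posSemidef_iff_dotProduct_mulVec]
    constructor
    · -- Hermitian
      show _ᴴ = _
      rw [conjTranspose_eq_transpose_of_trivial, transpose_sub, transpose_mul,
        transpose_mul, hM₁isym, hM₂sym, hMisym, ← mul_assoc]
    · intro x
      have hxstar : (star x : Fin p → ℝ) = x := by simp
      set u := M₁⁻¹ *ᵥ x with hu
      set v := M⁻¹ *ᵥ x with hv
      have hxu : M₁ *ᵥ u = x := by
        rw [hu, mulVec_mulVec, mul_nonsing_inv _ hM₁inv, one_mulVec]
      have hxv : M *ᵥ v = x := by
        rw [hv, mulVec_mulVec, mul_nonsing_inv _ hMinv, one_mulVec]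
      have e1 : x ⬝ᵥ ((M₁⁻¹ * M₂ * M₁⁻¹) *ᵥ x) = u ⬝ᵥ (M₂ *ᵥ u) := by
        have hvm : x ᵥ* M₁⁻¹ = u := by
          conv_lhs => rw [← hM₁isym]
          rw [vecMul_transpose]
        rw [← mulVec_mulVec, ← mulVec_mulVec, dotProduct_mulVec x M₁⁻¹, hvm]
      have q1 : u ⬝ᵥ (M₂ *ᵥ u) = ∑ i, lam i * w i ^ 2 * σ i ^ 2 * (f i ⬝ᵥ u) ^ 2 := by
        rw [hM₂, dot_sum_mulVec]
        exact Finset.sum_congr rfl fun i _ => by rw [dot_smul_vmv]; ring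
      have q2 : x ⬝ᵥ v = ∑ i, lam i * w i * (f i ⬝ᵥ u) * (f i ⬝ᵥ v) := by
        rw [← hxu, dotProduct_comm, hM₁, dot_sum_mulVec]
        exact Finset.sum_congr rfl fun i _ => by rw [dot_smul_vmv]; ring
      have q3 : x ⬝ᵥ v = ∑ i, lam i / σ i ^ 2 * (f i ⬝ᵥ v) ^ 2 := by
        rw [← hxv, dotProduct_comm, hM, dot_sum_mulVec]
        exact Finset.sum_congr rfl fun i _ => by rw [dot_smul_vmv]; ring
      have expand : ∑ i, lam i * (w i * σ i * (f i ⬝ᵥ u) - (σ i)⁻¹ * (f i ⬝ᵥ v)) ^ 2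
          = (∑ i, lam i * w i ^ 2 * σ i ^ 2 * (f i ⬝ᵥ u) ^ 2)
            - 2 * (∑ i, lam i * w i * (f i ⬝ᵥ u) * (f i ⬝ᵥ v))
            + (∑ i, lam i / σ i ^ 2 * (f i ⬝ᵥ v) ^ 2) := by
        rw [Finset.mul_sum, ← Finset.sum_sub_distrib, ← Finset.sum_add_distrib]
        refine Finset.sum_congr rfl fun i _ => ?_
        have hσi : σ i ≠ 0 := (hσ i).ne'
        field_simp
        ring
      have key : u ⬝ᵥ (M₂ *ᵥ u) - x ⬝ᵥ v
          = ∑ i, lam i * (w i * σ i * (f i ⬝ᵥ u) - (σ i)⁻¹ * (f i ⬝ᵥ v)) ^ 2 := by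
        linear_combination q1 - 2 * q2 + q3 - expand
      have hnn : 0 ≤ ∑ i, lam i * (w i * σ i * (f i ⬝ᵥ u) - (σ i)⁻¹ * (f i ⬝ᵥ v)) ^ 2 :=
        Finset.sum_nonneg fun i _ => mul_nonneg (hlam i) (sq_nonneg _)
      calc (0 : ℝ) ≤ u ⬝ᵥ (M₂ *ᵥ u) - x ⬝ᵥ v := key ▸ hnn
        _ = star x ⬝ᵥ ((M₁⁻¹ * M₂ * M₁⁻¹ - M⁻¹) *ᵥ x) := by
            rw [hxstar, sub_mulVec, dotProduct_sub, e1, hv]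
  · rintro ⟨c, hc, hwc⟩
    have hM₁c : M₁ = c • M := by
      rw [hM₁, hM, Finset.smul_sum]
      refine Finset.sum_congr rfl fun i _ => ?_
      rw [smul_smul, hwc i]
      congr 1
      ring
    have hM₂c : M₂ = (c ^ 2) • M := by
      rw [hM₂, hM, Finset.smul_sum]
      refine Finset.sum_congr rfl fun i _ => ?_
      rw [smul_smul, hwc i]
      have hσi : σ i ≠ 0 := (hσ i).ne'
      congr 1
      field_simp
    have hM₁i : M₁⁻¹ = c⁻¹ • M⁻¹ := by
      apply inv_eq_right_inv
      rw [hM₁c, Matrix.smul_mul, Matrix.mul_smul, smul_smul, mul_inv_cancel₀ hc.ne',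
        one_smul, mul_nonsing_inv _ hMinv]
    rw [hM₁i, hM₂c]
    have h1 : M⁻¹ * (c ^ 2 • M) = c ^ 2 • (1 : Matrix (Fin p) (Fin p) ℝ) := by
      rw [Matrix.mul_smul, nonsing_inv_mul _ hMinv]
    rw [Matrix.smul_mul, h1, Matrix.smul_mul, Matrix.smul_mul, Matrix.one_mul,
      smul_smul, smul_smul, show c⁻¹ * c ^ 2 * c⁻¹ = 1 by field_simp, one_smul]
end

section
/- Let T > 0, θ̄ ∈ ℝ, x₀ ∈ ℝ, and let (u_i)_{i≥0} be a deterministic real sequence. Define x_{i+1} = x_i + T[u_i + θ̄(x_i + 1)], and let y_i = x_i + ε_i where (ε_i)_{i≥1} are independent square-integrable real random variables with E[ε_i] = 0 and E[ε_i²] = σ². Then for every i ≥ 1, the corrected function g'_{i+1}(θ̄) = (1 + y_i) g_{i+1}(θ̄) + σ²(1 + Tθ̄), where g_{i+1}(θ) = y_{i+1} − y_i − T[u_i + θ(y_i + 1)], satisfies E[g'_{i+1}(θ̄)] = 0. -/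
open MeasureTheory ProbabilityTheory

/-- The bias-corrected nonlinear estimating function
`g'_{i+1}(θ̄) = (1 + y_i) g_{i+1}(θ̄) + σ²(1 + Tθ̄)`, with
`g_{i+1}(θ) = y_{i+1} − y_i − T[u_i + θ(y_i+1)]`, is unbiased at the true parameter
when the errors are independent, zero-mean, with variance σ². -/
theorem corrected_estimating_function_unbiased
    {Ω : Type*} [MeasurableSpace Ω] (P : Measure Ω) [IsProbabilityMeasure P]
    (T θ x₀ σ : ℝ) (hT : 0 < T) (u : ℕ → ℝ) (x : ℕ → ℝ)
    (hx₀ : x 0 = x₀)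
    (hx : ∀ i, x (i + 1) = x i + T * (u i + θ * (x i + 1)))
    (ε : ℕ → Ω → ℝ)
    (hmeas : ∀ i, Measurable (ε i))
    (hindep : iIndepFun ε P)
    (hint : ∀ i, 1 ≤ i → Integrable (ε i) P)
    (hintsq : ∀ i, 1 ≤ i → Integrable (fun ω => ε i ω ^ 2) P)
    (hmean : ∀ i, 1 ≤ i → ∫ ω, ε i ω ∂P = 0)
    (hvar : ∀ i, 1 ≤ i → ∫ ω, ε i ω ^ 2 ∂P = σ ^ 2)
    (y : ℕ → Ω → ℝ)
    (hy₀ : ∀ ω, y 0 ω = x₀)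
    (hy : ∀ i, 1 ≤ i → ∀ ω, y i ω = x i + ε i ω) :
    ∀ i, 1 ≤ i →
      ∫ ω, ((1 + y i ω) *
          (y (i + 1) ω - y i ω - T * (u i + θ * (y i ω + 1)))
          + σ ^ 2 * (1 + T * θ)) ∂P = 0 := by
  intro i hi
  have hi1 : 1 ≤ i + 1 := le_trans hi (Nat.le_succ i)
  have hab : IndepFun (ε i) (ε (i + 1)) P :=
    hindep.indepFun (by omega)
  have habint : Integrable (fun ω => ε i ω * ε (i + 1) ω) P :=
    hab.integrable_mul (hint i hi) (hint (i + 1) hi1)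
  have habmul : ∫ ω, ε i ω * ε (i + 1) ω ∂P = 0 := by
    have := hab.integral_mul_eq_mul_integral (hint i hi).aestronglyMeasurable (hint (i + 1) hi1).aestronglyMeasurable
    calc ∫ ω, ε i ω * ε (i + 1) ω ∂P = integral P (ε i * ε (i + 1)) := rfl
    _ = 0 := by rw [this, hmean (i + 1) hi1, mul_zero]
  have key : ∀ ω, (1 + y i ω) *
          (y (i + 1) ω - y i ω - T * (u i + θ * (y i ω + 1)))
          + σ ^ 2 * (1 + T * θ)
      = (1 + x i) * ε (i + 1) ω
        + (-(1 + x i) * (1 + T * θ)) * ε i ω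
        + ε i ω * ε (i + 1) ω
        + (-(1 + T * θ)) * ε i ω ^ 2
        + σ ^ 2 * (1 + T * θ) := by
    intro ω
    rw [hy i hi, hy (i + 1) hi1, hx i]
    ring
  simp_rw [key]
  have I1 : Integrable (fun ω => (1 + x i) * ε (i + 1) ω) P :=
    (hint (i + 1) hi1).const_mul _
  have I2 : Integrable (fun ω => (-(1 + x i) * (1 + T * θ)) * ε i ω) P :=
    (hint i hi).const_mul _
  have I3 : Integrable (fun ω => (-(1 + T * θ)) * ε i ω ^ 2) P :=
    (hintsq i hi).const_mul _
  have I12 : Integrable (fun ω => (1 + x i) * ε (i + 1) ω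
      + (-(1 + x i) * (1 + T * θ)) * ε i ω) P := I1.add I2
  have I123 : Integrable (fun ω => ((1 + x i) * ε (i + 1) ω
      + (-(1 + x i) * (1 + T * θ)) * ε i ω) + ε i ω * ε (i + 1) ω) P := I12.add habint
  have I1234 : Integrable (fun ω => (((1 + x i) * ε (i + 1) ω
      + (-(1 + x i) * (1 + T * θ)) * ε i ω) + ε i ω * ε (i + 1) ω)
      + (-(1 + T * θ)) * ε i ω ^ 2) P := I123.add I3
  rw [integral_add I1234 (integrable_const _),
    integral_add I123 I3,
    integral_add I12 habint, integral_add I1 I2,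
    integral_const_mul, integral_const_mul, integral_const_mul,
    hmean i hi, hmean (i + 1) hi1, hvar i hi, habmul, integral_const]
  simp
  ring
end
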